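/- Let Γ ≅ (ℤ/2)³ act linearly on Λ^m(ℝ⁷)* through the sign actions induced by α, β, γ (where α negates coordinates x₄,…,x₇, β negates x₂,x₃,x₆,x₇, and γ negates x₁,x₃,x₅,x₇). Then the subspace of Γ-invariant 2-forms is zero, and the subspace of Γ-invariant 3-forms has dimension 7. -/

import Mathlib

set_option maxRecDepth 100000



/-- The linear involution of `ℝ⁷` negating the coordinates in `S`. -/
def sgnMap (S : Finset (Fin 7)) : (Fin 7 → ℝ) →ₗ[ℝ] (Fin 7 → ℝ) where
  toFun x := fun i => if i ∈ S then -x i else x i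
  map_add' x y := by funext i; by_cases h : i ∈ S <;> simp [h] <;> ring
  map_smul' c x := by funext i; by_cases h : i ∈ S <;> simp [h]

/-- The submodule of constant-coefficient `m`-forms on `ℝ⁷` invariant under the
`Γ ≅ (ℤ/2)³` action generated by the linear parts of `α` (negating `x₄,…,x₇`,
0-indexed `3,4,5,6`), `β` (negating `x₂,x₃,x₆,x₇`, 0-indexed `1,2,5,6`) and `γ`
(negating `x₁,x₃,x₅,x₇`, 0-indexed `0,2,4,6`). -/
noncomputable def invariantForms (m : ℕ) : Submodule ℝ ((Fin 7 → ℝ) [⋀^Fin m]→ₗ[ℝ] ℝ) where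
  carrier := {w | w.compLinearMap (sgnMap {3, 4, 5, 6}) = w ∧
      w.compLinearMap (sgnMap {1, 2, 5, 6}) = w ∧
      w.compLinearMap (sgnMap {0, 2, 4, 6}) = w}
  add_mem' := by
    intro a b ha hb
    obtain ⟨ha1, ha2, ha3⟩ := ha
    obtain ⟨hb1, hb2, hb3⟩ := hb
    refine ⟨?_, ?_, ?_⟩ <;>
      simp [AlternatingMap.add_compLinearMap, ha1, ha2, ha3, hb1, hb2, hb3]
  zero_mem' := by
    refine ⟨?_, ?_, ?_⟩ <;> exact AlternatingMap.zero_compLinearMap _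
  smul_mem' := by
    intro c a ha
    obtain ⟨ha1, ha2, ha3⟩ := ha
    have key : ∀ L : (Fin 7 → ℝ) →ₗ[ℝ] (Fin 7 → ℝ),
        (c • a).compLinearMap L = c • a.compLinearMap L := by
      intro L
      ext v
      simp [AlternatingMap.compLinearMap_apply]
    refine ⟨?_, ?_, ?_⟩ <;> simp [key, ha1, ha2, ha3]

namespace InvAux

noncomputable def ε (S : Finset (Fin 7)) (i : Fin 7) : ℝ := if i ∈ S then -1 else 1

def cnt (S : Finset (Fin 7)) (i : Fin 7) : ℕ := if i ∈ S then 1 else 0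

lemma ε_eq (S : Finset (Fin 7)) (i : Fin 7) : ε S i = (-1 : ℝ) ^ cnt S i := by
  unfold ε cnt; split <;> simp

lemma sgnMap_apply (S : Finset (Fin 7)) (x : Fin 7 → ℝ) (j : Fin 7) :
    sgnMap S x j = ε S j * x j := by
  simp only [sgnMap, LinearMap.coe_mk, AddHom.coe_mk, ε]
  split <;> ring

lemma sgn_single (S : Finset (Fin 7)) (i : Fin 7) :
    sgnMap S (Pi.single i (1:ℝ)) = ε S i • (Pi.single i 1 : Fin 7 → ℝ) := by
  funext j
  rw [sgnMap_apply]
  rcases eq_or_ne j i with rfl | hj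
  · simp
  · simp [Pi.single_apply, hj]

lemma eval_eq (m : ℕ) (w : (Fin 7 → ℝ) [⋀^Fin m]→ₗ[ℝ] ℝ) (S : Finset (Fin 7))
    (h : w.compLinearMap (sgnMap S) = w) (v : Fin m → Fin 7) :
    ((-1:ℝ) ^ (∑ i, cnt S (v i))) * w (fun i => Pi.single (v i) 1)
      = w (fun i => Pi.single (v i) 1) := by
  have h' := DFunLike.congr_fun h (fun i => Pi.single (v i) (1:ℝ))
  rw [AlternatingMap.compLinearMap_apply] at h'
  simp_rw [sgn_single] at h'
  calc ((-1:ℝ) ^ (∑ i, cnt S (v i))) * w (fun i => Pi.single (v i) 1)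
      = (∏ i, ε S (v i)) * w (fun i => Pi.single (v i) 1) := by
        simp_rw [ε_eq]; rw [Finset.prod_pow_eq_pow_sum]
    _ = w (fun i => ε S (v i) • (Pi.single (v i) 1 : Fin 7 → ℝ)) := by
        rw [show (w fun i => ε S (v i) • (Pi.single (v i) 1 : Fin 7 → ℝ))
            = (∏ i, ε S (v i)) • w (fun i => Pi.single (v i) 1) from
          w.toMultilinearMap.map_smul_univ (fun i => ε S (v i))
            (fun i => Pi.single (v i) 1)]
        rw [smul_eq_mul]
    _ = w fun i => Pi.single (v i) 1 := h'

lemma eval_zero (m : ℕ) (w : (Fin 7 → ℝ) [⋀^Fin m]→ₗ[ℝ] ℝ) (S : Finset (Fin 7))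
    (h : w.compLinearMap (sgnMap S) = w) (v : Fin m → Fin 7)
    (hodd : Odd (∑ i, cnt S (v i))) :
    w (fun i => Pi.single (v i) 1) = 0 := by
  have := eval_eq m w S h v
  rw [Odd.neg_one_pow hodd] at this
  linarith

end InvAux

namespace InvAux

def Sα : Finset (Fin 7) := {3, 4, 5, 6}
def Sβ : Finset (Fin 7) := {1, 2, 5, 6}
def Sγ : Finset (Fin 7) := {0, 2, 4, 6}

def lines : Fin 7 → Fin 3 → Fin 7 :=
  ![![0,1,2], ![0,3,4], ![0,5,6], ![1,3,5], ![1,4,6], ![2,3,6], ![2,4,5]]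

lemma key2 : ∀ a b : Fin 7, a ≠ b →
    Odd (cnt Sα a + cnt Sα b) ∨ Odd (cnt Sβ a + cnt Sβ b) ∨
    Odd (cnt Sγ a + cnt Sγ b) := by decide

lemma key3 : ∀ a b c : Fin 7, a ≠ b → a ≠ c → b ≠ c →
    (∃ l : Fin 7, ∃ σ : Equiv.Perm (Fin 3), ∀ i, ![a, b, c] i = lines l (σ i)) ∨
    Odd (cnt Sα a + cnt Sα b + cnt Sα c) ∨ Odd (cnt Sβ a + cnt Sβ b + cnt Sβ c) ∨
    Odd (cnt Sγ a + cnt Sγ b + cnt Sγ c) := by decide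

lemma lines_inj : ∀ l : Fin 7, Function.Injective (lines l) := by decide

lemma lines_parity : ∀ l : Fin 7, ∀ S ∈ [Sα, Sβ, Sγ],
    Even (∑ j, cnt S (lines l j)) := by decide

lemma lines_disjoint : ∀ l l' : Fin 7, l ≠ l' → ∃ i, ∀ j, lines l j ≠ lines l' i := by
  decide

end InvAux

namespace InvAux

noncomputable def lineForm (l : Fin 7) : (Fin 7 → ℝ) [⋀^Fin 3]→ₗ[ℝ] ℝ :=
  (Matrix.detRowAlternating).compLinearMap (LinearMap.funLeft ℝ ℝ (lines l))

lemma lineForm_apply (l : Fin 7) (v : Fin 3 → (Fin 7 → ℝ)) :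
    lineForm l v = Matrix.det (Matrix.of fun i j => v i (lines l j)) := rfl

lemma lineForm_comp_sgn (l : Fin 7) (S : Finset (Fin 7))
    (hS : Even (∑ j, cnt S (lines l j))) :
    (lineForm l).compLinearMap (sgnMap S) = lineForm l := by
  ext v
  rw [AlternatingMap.compLinearMap_apply, lineForm_apply, lineForm_apply]
  have : (Matrix.of fun i j => (sgnMap S (v i)) (lines l j))
      = Matrix.of fun i j => ε S (lines l j) * v i (lines l j) := by
    ext i j
    exact sgnMap_apply S (v i) (lines l j)
  rw [this]; erw [Matrix.det_mul_row (fun j => ε S (lines l j)) (Matrix.of fun i j => v i (lines l j))]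
  have hprod : (∏ j, ε S (lines l j)) = 1 := by
    simp_rw [ε_eq]
    rw [Finset.prod_pow_eq_pow_sum, Even.neg_one_pow hS]
  rw [hprod, one_mul]

lemma lineForm_mem (l : Fin 7) :
    (lineForm l).compLinearMap (sgnMap {3, 4, 5, 6}) = lineForm l ∧
    (lineForm l).compLinearMap (sgnMap {1, 2, 5, 6}) = lineForm l ∧
    (lineForm l).compLinearMap (sgnMap {0, 2, 4, 6}) = lineForm l := by
  refine ⟨lineForm_comp_sgn l Sα ?_, lineForm_comp_sgn l Sβ ?_, lineForm_comp_sgn l Sγ ?_⟩ <;>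
    exact lines_parity l _ (by simp [Sα, Sβ, Sγ])

lemma lineForm_eval (l l' : Fin 7) :
    lineForm l (fun i => Pi.single (lines l' i) 1) = if l = l' then 1 else 0 := by
  rw [lineForm_apply]
  rcases eq_or_ne l l' with rfl | hne
  · rw [if_pos rfl]
    have : (Matrix.of fun i j => (Pi.single (lines l i) 1 : Fin 7 → ℝ) (lines l j))
        = (1 : Matrix (Fin 3) (Fin 3) ℝ) := by
      ext i j
      simp only [Matrix.of_apply, Pi.single_apply, Matrix.one_apply]
      by_cases h : i = j
      · simp [h]
      · have : lines l j ≠ lines l i := fun he => h (lines_inj l he).symm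
        simp [this, h]
    rw [this, Matrix.det_one]
  · rw [if_neg hne]
    obtain ⟨i, hi⟩ := lines_disjoint l l' hne
    apply Matrix.det_eq_zero_of_row_eq_zero i
    intro j
    simp only [Matrix.of_apply, Pi.single_apply]
    exact if_neg (hi j)

end InvAux

namespace InvAux

noncomputable def phi : invariantForms 3 →ₗ[ℝ] (Fin 7 → ℝ) where
  toFun w := fun l =>
    (w : (Fin 7 → ℝ) [⋀^Fin 3]→ₗ[ℝ] ℝ) (fun i => Pi.single (lines l i) 1)
  map_add' a b := by funext l; simp
  map_smul' c a := by funext l; simp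

lemma phi_inj : Function.Injective phi := by
  suffices hk : LinearMap.ker phi = ⊥ by
    intro x y hxy
    have := congrArg Subtype.val (LinearMap.ker_eq_bot'.mp hk (x + (-1:ℝ) • y) (by rw [map_add, map_smul, hxy]; simp))
    rw [Submodule.coe_add, Submodule.coe_smul, neg_one_smul, ← sub_eq_add_neg, Submodule.coe_zero, sub_eq_zero] at this
    exact Subtype.ext this
  rw [eq_bot_iff]
  rintro ⟨w, ha, hb, hc⟩ hw
  have hw' : ∀ l, w (fun i => Pi.single (lines l i) 1) = 0 := by
    intro l
    exact congrFun (LinearMap.mem_ker.mp hw) l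
  simp only [Submodule.mem_bot]
  refine Subtype.ext ?_
  show w = 0
  apply Module.Basis.ext_alternating (Pi.basisFun ℝ (Fin 7))
  intro v hv
  simp only [Pi.basisFun_apply, AlternatingMap.zero_apply]
  have h01 : v 0 ≠ v 1 := fun h => absurd (hv h) (by decide)
  have h02 : v 0 ≠ v 2 := fun h => absurd (hv h) (by decide)
  have h12 : v 1 ≠ v 2 := fun h => absurd (hv h) (by decide)
  rcases key3 (v 0) (v 1) (v 2) h01 h02 h12 with ⟨l, σ, hσ⟩ | h | h | h
  · have h0 := hσ 0
    have h1 := hσ 1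
    have h2 := hσ 2
    simp only [Matrix.cons_val_zero, Matrix.cons_val_one, Matrix.head_cons,
      Matrix.cons_val_two, Matrix.tail_cons] at h0 h1 h2
    have hv3 : ∀ i, v i = lines l (σ i) := by
      intro i; fin_cases i <;> assumption
    have hcomp : (fun i => (Pi.single (v i) 1 : Fin 7 → ℝ))
        = (fun j => (Pi.single (lines l j) 1 : Fin 7 → ℝ)) ∘ σ := by
      funext i
      simp only [Function.comp_apply, hv3 i]
    rw [hcomp, w.map_perm, hw' l, smul_zero]
  · exact eval_zero 3 w _ ha v (by rwa [Fin.sum_univ_three])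
  · exact eval_zero 3 w _ hb v (by rwa [Fin.sum_univ_three])
  · exact eval_zero 3 w _ hc v (by rwa [Fin.sum_univ_three])

lemma phi_surj : Function.Surjective phi := by
  intro y
  refine ⟨∑ l, y l • ⟨lineForm l, lineForm_mem l⟩, ?_⟩
  funext l'
  rw [map_sum]
  simp only [Finset.sum_apply]
  have : ∀ l : Fin 7, phi (y l • ⟨lineForm l, lineForm_mem l⟩) l'
      = y l * (if l = l' then 1 else 0) := by
    intro l
    rw [map_smul]
    simp only [Pi.smul_apply, smul_eq_mul]
    congr 1
    exact lineForm_eval l l'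
  simp_rw [this, mul_ite, mul_one, mul_zero]
  simp

end InvAux

/-- The space of `Γ`-invariant constant-coefficient 2-forms on `ℝ⁷` is zero, and the
space of `Γ`-invariant 3-forms has dimension 7 (computing `b²(T⁷/Γ) = 0` and
`b³(T⁷/Γ) = 7`). -/
theorem invariantForms_dim :
    invariantForms 2 = ⊥ ∧ Module.finrank ℝ (invariantForms 3) = 7 := by
  constructor
  · rw [eq_bot_iff]
    intro w hw
    obtain ⟨ha, hb, hc⟩ := hw
    simp only [Submodule.mem_bot]
    apply Module.Basis.ext_alternating (Pi.basisFun ℝ (Fin 7))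
    intro v hv
    have hne : v 0 ≠ v 1 := fun h => absurd (hv h) (by decide)
    have key := InvAux.key2 (v 0) (v 1) hne
    simp only [Pi.basisFun_apply, AlternatingMap.zero_apply]
    rcases key with h | h | h <;>
      [exact InvAux.eval_zero 2 w _ ha v (by rwa [Fin.sum_univ_two]);
       exact InvAux.eval_zero 2 w _ hb v (by rwa [Fin.sum_univ_two]);
       exact InvAux.eval_zero 2 w _ hc v (by rwa [Fin.sum_univ_two])]
  · have e := LinearEquiv.ofBijective InvAux.phi ⟨InvAux.phi_inj, InvAux.phi_surj⟩
    rw [e.finrank_eq]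
    exact Module.finrank_fin_fun ℝ
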